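/- arXiv:2605.15928 — 2 statements merged into one kernel-verified Lean document; each statement's English description precedes it below -/
import Mathlib

section
/- There exist ε* ∈ (0,1) and c > 0, depending only on κ, M, β₀ and σ₀, such that if ε₀ ≤ ε*, then for every n ≥ 1 the collection 𝔸_n is a finite set of finite subsets of ℕ and Σ_{A ∈ 𝔸_n} L_n^{2|A|+1} ≤ c · exp( |log ε_n|^{4/5} ). -/
/-!
Common setting: mass sequences, inductive KAM constants ε_n, σ_n, L_n,
the collections 𝔸_n of finite sets, and the Diophantine sets 𝒪_n.
-/

open scoped ENNReal NNReal BigOperators Classical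

noncomputable section

/-- A mass sequence: non-increasing, with values in (0,1], and `m i ≤ M e^{-κ i}`. -/
structure IsMassSeq (κ M : ℝ) (m : ℕ → ℝ) : Prop where
  pos : ∀ i, 0 < m i
  le_one : ∀ i, m i ≤ 1
  anti : Antitone m
  decay : ∀ i : ℕ, m i ≤ M * Real.exp (-κ * i)

/-- `m_A = ∏_{j∈A} m_j`. -/
def mProd (m : ℕ → ℝ) (A : Finset ℕ) : ℝ := ∏ i ∈ A, m i

/-- `A̲ = A \ {max A}` : the elements of `A` strictly below its maximum. -/
def under (A : Finset ℕ) : Finset ℕ := A.filter fun j => ∃ i ∈ A, j < i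

/-- `ε_n`, defined by `ε_{n+1} = ε_n^{5/4}`. -/
def eps (ε₀ : ℝ) : ℕ → ℝ
  | 0 => ε₀
  | n + 1 => eps ε₀ n ^ (5 / 4 : ℝ)

/-- `s_n = σ₀/(8n²)` (for `n ≥ 1`). -/
def sn (σ₀ : ℝ) (n : ℕ) : ℝ := σ₀ / (8 * (n : ℝ) ^ 2)

/-- `σ_n`: `σ₁ = σ₀`, `σ_{n+1} = σ_n − 2 s_n` for `n ≥ 1`. -/
def sig (σ₀ : ℝ) : ℕ → ℝ
  | 0 => σ₀
  | n + 1 => if n = 0 then σ₀ else sig σ₀ n - 2 * sn σ₀ n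

/-- `L_n = σ_n^{-1} |log(ε_{n+1}/ε_n)|`. -/
def Ln (σ₀ ε₀ : ℝ) (n : ℕ) : ℝ := |Real.log (eps ε₀ (n + 1) / eps ε₀ n)| / sig σ₀ n

/-- `μ_n = β₀/(8n²)` (for `n ≥ 1`). -/
def mun (β₀ : ℝ) (n : ℕ) : ℝ := β₀ / (8 * (n : ℝ) ^ 2)

/-- `𝔸_n = {A finite : (m_A)^{μ_n} ≥ ε_{n+1}/ε_n}`. -/
def An (m : ℕ → ℝ) (β₀ ε₀ : ℝ) (n : ℕ) : Set (Finset ℕ) :=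
  {A | eps ε₀ (n + 1) / eps ε₀ n ≤ mProd m A ^ mun β₀ n}

/-- `𝒪_n`: the set of `ξ ∈ [a,b]^ℕ` such that `|Σ_{j∈A} l_j ξ_j| ≥ ε_n^{1/12}` for every
finite `A ⊆ ℕ` with `A̲ ∈ 𝔸_n` and every integer vector `l` supported in `A` with
`0 < |l|₁ ≤ L_n`. -/
def DiophSet (m : ℕ → ℝ) (β₀ σ₀ ε₀ a b : ℝ) (n : ℕ) : Set (ℕ → ℝ) :=
  {ξ | (∀ j, ξ j ∈ Set.Icc a b) ∧
    ∀ A : Finset ℕ, under A ∈ An m β₀ ε₀ n →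
      ∀ l : ℕ → ℤ, (∀ j, l j ≠ 0 → j ∈ A) →
        0 < ∑ j ∈ A, (l j).natAbs →
        ((∑ j ∈ A, (l j).natAbs : ℕ) : ℝ) ≤ Ln σ₀ ε₀ n →
        eps ε₀ n ^ (1 / 12 : ℝ) ≤ |∑ j ∈ A, (l j : ℝ) * ξ j|}


/-! ### Auxiliary lemmas -/

lemma my_eps_pos {ε₀ : ℝ} (h : 0 < ε₀) (n : ℕ) : 0 < eps ε₀ n := by
  induction n with
  | zero => exact h
  | succ n ih => exact Real.rpow_pos_of_pos ih _

lemma my_eps_lt_one {ε₀ : ℝ} (h0 : 0 < ε₀) (h1 : ε₀ < 1) (n : ℕ) : eps ε₀ n < 1 := by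
  induction n with
  | zero => exact h1
  | succ n ih => exact Real.rpow_lt_one (my_eps_pos h0 n).le ih (by norm_num)

lemma my_eps_succ (ε₀ : ℝ) (n : ℕ) : eps ε₀ (n + 1) = eps ε₀ n ^ (5 / 4 : ℝ) := rfl

lemma my_log_eps_succ {ε₀ : ℝ} (h0 : 0 < ε₀) (n : ℕ) :
    Real.log (eps ε₀ (n + 1)) = (5 / 4 : ℝ) * Real.log (eps ε₀ n) := by
  rw [my_eps_succ, Real.log_rpow (my_eps_pos h0 n)]

lemma my_neglog_eq {ε₀ : ℝ} (h0 : 0 < ε₀) (n : ℕ) :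
    -Real.log (eps ε₀ n) = (5 / 4 : ℝ) ^ n * (-Real.log ε₀) := by
  induction n with
  | zero => simp [eps]
  | succ n ih =>
    rw [my_log_eps_succ h0 n, show -((5 / 4 : ℝ) * Real.log (eps ε₀ n))
        = (5 / 4 : ℝ) * (-Real.log (eps ε₀ n)) by ring, ih, pow_succ]
    ring

lemma my_neglog_ge {ε₀ : ℝ} (h0 : 0 < ε₀) (h1 : ε₀ < 1) (n : ℕ) :
    -Real.log ε₀ ≤ -Real.log (eps ε₀ n) := by
  induction n with
  | zero => exact le_refl _
  | succ n ih =>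
    have h2 : Real.log (eps ε₀ n) < 0 :=
      Real.log_neg (my_eps_pos h0 n) (my_eps_lt_one h0 h1 n)
    rw [my_log_eps_succ h0 n]
    nlinarith

lemma my_sig_le {σ₀ : ℝ} (h : 0 < σ₀) (n : ℕ) : sig σ₀ n ≤ σ₀ := by
  induction n with
  | zero => exact le_refl _
  | succ n ih =>
    show (if n = 0 then σ₀ else sig σ₀ n - 2 * sn σ₀ n) ≤ σ₀
    split
    · exact le_refl _
    · have hsn : (0:ℝ) ≤ sn σ₀ n := by unfold sn; positivity
      linarith

lemma my_sig_ge_aux {σ₀ : ℝ} (h : 0 < σ₀) :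
    ∀ k : ℕ, σ₀ / 2 + σ₀ / (4 * ((k : ℝ) + 1)) ≤ sig σ₀ (k + 2) := by
  intro k
  induction k with
  | zero =>
    have h2 : sig σ₀ 2 = sig σ₀ 1 - 2 * sn σ₀ 1 := by simp [sig]
    have h1 : sig σ₀ 1 = σ₀ := by simp [sig]
    have hs1 : sn σ₀ 1 = σ₀ / 8 := by unfold sn; norm_num
    rw [h2, h1, hs1]; linarith
  | succ k ih =>
    have h3 : sig σ₀ (k + 3) = sig σ₀ (k + 2) - 2 * sn σ₀ (k + 2) := by simp [sig]
    have hsn : sn σ₀ (k + 2) = σ₀ / (8 * ((k : ℝ) + 2) ^ 2) := by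
      unfold sn; push_cast; ring_nf
    have hk2 : (0:ℝ) < (k : ℝ) + 2 := by positivity
    have key : σ₀ / (4 * ((k : ℝ) + 2)) + σ₀ / (4 * ((k : ℝ) + 2) ^ 2)
        ≤ σ₀ / (4 * ((k : ℝ) + 1)) := by
      rw [div_add_div _ _ (by positivity) (by positivity),
        div_le_div_iff₀ (by positivity) (by positivity)]
      nlinarith [mul_nonneg h.le hk2.le, sq_nonneg ((k:ℝ) + 2),
        mul_nonneg (mul_nonneg h.le hk2.le) hk2.le]
    have hk2' : ((k : ℝ) + 2) ^ 2 ≠ 0 := by positivity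
    have he : 2 * (σ₀ / (8 * ((k : ℝ) + 2) ^ 2)) = σ₀ / (4 * ((k : ℝ) + 2) ^ 2) := by
      field_simp; ring
    have goalcast : σ₀ / 2 + σ₀ / (4 * (((k:ℕ) + 1 : ℕ) : ℝ) + 4) ≤ sig σ₀ (k + 1 + 2) → True := fun _ => trivial
    show σ₀ / 2 + σ₀ / (4 * (((k + 1 : ℕ)) + 1 : ℝ)) ≤ sig σ₀ (k + 1 + 2)
    have : ((k + 1 : ℕ) : ℝ) + 1 = (k : ℝ) + 2 := by push_cast; ring
    rw [this, show k + 1 + 2 = k + 3 from rfl, h3, hsn]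
    linarith [ih, key, he]

lemma my_sig_ge {σ₀ : ℝ} (h : 0 < σ₀) (n : ℕ) (hn : 1 ≤ n) : σ₀ / 2 ≤ sig σ₀ n := by
  match n, hn with
  | 1, _ => have : sig σ₀ 1 = σ₀ := by simp [sig]
            rw [this]; linarith
  | (k + 2), _ =>
    have h1 := my_sig_ge_aux h k
    have h2 : (0:ℝ) < σ₀ / (4 * ((k : ℝ) + 1)) := by positivity
    linarith

lemma my_tri (A : Finset ℕ) : ∑ i ∈ Finset.range A.card, i ≤ ∑ i ∈ A, i := by
  induction A using Finset.strongInduction with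
  | _ A ih =>
    rcases A.eq_empty_or_nonempty with rfl | hne
    · simp
    · have hx : A.max' hne ∈ A := A.max'_mem hne
      have hcard : A.card ≤ A.max' hne + 1 := by
        have hsub : A ⊆ Finset.range (A.max' hne + 1) := fun i hi =>
          Finset.mem_range.mpr (Nat.lt_succ_of_le (A.le_max' i hi))
        simpa using Finset.card_le_card hsub
      have he : (A.erase (A.max' hne)).card = A.card - 1 := Finset.card_erase_of_mem hx
      have hc1 : 1 ≤ A.card := Finset.card_pos.mpr hne
      calc ∑ i ∈ Finset.range A.card, i
          = ∑ i ∈ Finset.range (A.card - 1), i + (A.card - 1) := by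
            conv_lhs => rw [show A.card = (A.card - 1) + 1 by omega]
            exact Finset.sum_range_succ _ _
        _ ≤ ∑ i ∈ A.erase (A.max' hne), i + A.max' hne := by
            have ih' := ih _ (Finset.erase_ssubset hx)
            rw [he] at ih'
            exact Nat.add_le_add ih' (by omega)
        _ = ∑ i ∈ A, i := Finset.sum_erase_add A _ hx

lemma my_gauss (k : ℕ) : 2 * ∑ i ∈ Finset.range k, (i : ℝ) = (k : ℝ) ^ 2 - k := by
  induction k with
  | zero => simp
  | succ k ih =>
    rw [Finset.sum_range_succ, mul_add, ih]
    push_cast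
    ring

/-!
STATEMENT 12 (Lemma 7.6): for `ε₀` small enough (depending only on κ, M, β₀, σ₀),
every `𝔸_n` is finite and `Σ_{A ∈ 𝔸_n} L_n^{2|A|+1} ≤ c exp(|log ε_n|^{4/5})`.
-/

set_option maxHeartbeats 4000000 in
theorem An_counting_estimate
    (κ M β₀ σ₀ : ℝ) (hκ : 0 < κ) (hM : 1 ≤ M)
    (hβ₀ : β₀ ∈ Set.Ioo (0 : ℝ) 1) (hσ₀ : 0 < σ₀) :
    ∃ εstar c : ℝ, εstar ∈ Set.Ioo (0 : ℝ) 1 ∧ 0 < c ∧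
      ∀ m : ℕ → ℝ, IsMassSeq κ M m →
      ∀ ε₀ : ℝ, ε₀ ∈ Set.Ioo (0 : ℝ) 1 → ε₀ ≤ εstar →
      ∀ n : ℕ, 1 ≤ n →
        ∃ hfin : (An m β₀ ε₀ n).Finite,
          ∑ A ∈ hfin.toFinset, Ln σ₀ ε₀ n ^ (2 * A.card + 1) ≤
            c * Real.exp (|Real.log (eps ε₀ n)| ^ (4 / 5 : ℝ)) := by
  obtain ⟨hβ0, hβ1⟩ := hβ₀
  have hM0 : (0:ℝ) < M := by linarith
  have hlogM0 : 0 ≤ Real.log M := Real.log_nonneg hM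
  -- constants
  obtain ⟨E₁, hE₁def⟩ : ∃ x : ℝ, x = 40000 / (κ * β₀) + 8 * (2 * Real.log M + κ) ^ 2 / κ ^ 2 := ⟨_, rfl⟩
  have hE₁0 : 0 ≤ E₁ := by rw [hE₁def]; positivity
  obtain ⟨G₁, hG₁def⟩ : ∃ x : ℝ, x = Real.sqrt E₁ := ⟨_, rfl⟩
  have hG₁0 : 0 ≤ G₁ := by rw [hG₁def]; exact Real.sqrt_nonneg _
  have hG₁sq : G₁ ^ 2 = E₁ := by rw [hG₁def]; exact Real.sq_sqrt hE₁0
  obtain ⟨E₂, hE₂def⟩ : ∃ x : ℝ, x = (5000 / β₀ + G₁ * (2 * Real.log M + κ)) / κ := ⟨_, rfl⟩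
  have hE₂0 : 0 < E₂ := by rw [hE₂def]; positivity
  obtain ⟨E₃, hE₃def⟩ : ∃ x : ℝ, x = Real.log (E₂ + 1) + 12 := ⟨_, rfl⟩
  have hE₃0 : 0 ≤ E₃ := by
    have := Real.log_nonneg (by linarith : (1:ℝ) ≤ E₂ + 1)
    rw [hE₃def]; linarith
  obtain ⟨E₄, hE₄def⟩ : ∃ x : ℝ, x = Real.log (1 / (2 * σ₀) + 1) + 10 := ⟨_, rfl⟩
  have hE₄0 : 0 ≤ E₄ := by
    have h0' : (0:ℝ) ≤ 1 / (2 * σ₀) := by positivity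
    have := Real.log_nonneg (by linarith : (1:ℝ) ≤ 1 / (2 * σ₀) + 1)
    rw [hE₄def]; linarith
  obtain ⟨D, hDdef⟩ : ∃ x : ℝ, x = G₁ + G₁ * E₃ + 2 * G₁ * E₄ + E₄ + 1 := ⟨_, rfl⟩
  have hD1 : 1 ≤ D := by
    rw [hDdef]
    linarith only [mul_nonneg hG₁0 hE₃0, mul_nonneg hG₁0 hE₄0, hG₁0, hE₄0]
  have hD0 : 0 < D := by linarith
  obtain ⟨Λ, hΛdef⟩ : ∃ x : ℝ, x = max 3 (max (4 * σ₀) (D ^ 10)) := ⟨_, rfl⟩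
  have hΛ3 : (3:ℝ) ≤ Λ := by rw [hΛdef]; exact le_max_left _ _
  have hΛσ : 4 * σ₀ ≤ Λ := by rw [hΛdef]; exact le_trans (le_max_left _ _) (le_max_right _ _)
  have hΛD : D ^ 10 ≤ Λ := by rw [hΛdef]; exact le_trans (le_max_right _ _) (le_max_right _ _)
  have hΛ0 : (0:ℝ) < Λ := by linarith
  refine ⟨Real.exp (-Λ), 1, ⟨Real.exp_pos _, Real.exp_lt_one_iff.mpr (by linarith)⟩,
    one_pos, ?_⟩
  intro m hm ε₀ hε₀ hεs n hn
  obtain ⟨hε0, hε1⟩ := hε₀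
  have heps0 : 0 < eps ε₀ n := my_eps_pos hε0 n
  have heps1 : eps ε₀ n < 1 := my_eps_lt_one hε0 hε1 n
  have hlogneg : Real.log (eps ε₀ n) < 0 := Real.log_neg heps0 heps1
  obtain ⟨t, ht_def⟩ : ∃ x : ℝ, x = -Real.log (eps ε₀ n) := ⟨_, rfl⟩
  have ht0 : 0 < t := by rw [ht_def]; linarith
  have hlamL : Λ ≤ -Real.log ε₀ := by
    have h1 : Real.log ε₀ ≤ Real.log (Real.exp (-Λ)) :=
      (Real.log_le_log_iff hε0 (Real.exp_pos _)).mpr hεs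
    rw [Real.log_exp] at h1
    linarith
  have htΛ : Λ ≤ t := by
    have h := my_neglog_ge hε0 hε1 n
    rw [← ht_def] at h
    linarith
  have ht3 : (3:ℝ) ≤ t := le_trans hΛ3 htΛ
  have ht1 : (1:ℝ) ≤ t := by linarith
  have ht4σ : 4 * σ₀ ≤ t := le_trans hΛσ htΛ
  have htD : D ^ 10 ≤ t := le_trans hΛD htΛ
  -- the u variable
  obtain ⟨u, hu_def⟩ : ∃ x : ℝ, x = t ^ ((1:ℝ) / 10) := ⟨_, rfl⟩
  have hu1 : (1:ℝ) ≤ u := by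
    rw [hu_def]
    calc (1:ℝ) = 1 ^ ((1:ℝ)/10) := (Real.one_rpow _).symm
      _ ≤ t ^ ((1:ℝ)/10) := Real.rpow_le_rpow (by norm_num) ht1 (by norm_num)
  have hu0 : (0:ℝ) < u := by linarith
  have htu : t = u ^ 10 := by
    rw [hu_def, ← Real.rpow_natCast (t ^ ((1:ℝ)/10)) 10, ← Real.rpow_mul ht0.le]
    norm_num
  have ht45 : t ^ ((4:ℝ)/5) = u ^ 8 := by
    rw [hu_def, ← Real.rpow_natCast (t ^ ((1:ℝ)/10)) 8, ← Real.rpow_mul ht0.le]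
    norm_num
  have hlogt10u : Real.log t ≤ 10 * u := by
    have h1 := Real.log_le_rpow_div ht0.le (show (0:ℝ) < 1/10 by norm_num)
    rw [← hu_def] at h1
    linarith
  have huD : D ≤ u := by
    have h2 : (D ^ 10) ^ ((1:ℝ)/10) ≤ t ^ ((1:ℝ)/10) :=
      Real.rpow_le_rpow (by positivity) htD (by norm_num)
    have h3 : (D ^ 10) ^ ((1:ℝ)/10) = D := by
      rw [← Real.rpow_natCast D 10, ← Real.rpow_mul hD0.le]
      norm_num
    rw [hu_def, ← h3]; exact h2
  have hu12 : (1:ℝ) ≤ u ^ 12 := by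
    calc (1:ℝ) = 1 ^ 12 := by norm_num
      _ ≤ u ^ 12 := pow_le_pow_left₀ (by norm_num) hu1 12
  have hu612 : u ^ 6 ≤ u ^ 12 := pow_le_pow_right₀ hu1 (by norm_num)
  -- n is at most 50 u
  have hn1R : (1:ℝ) ≤ (n:ℝ) := by exact_mod_cast hn
  have hn50u : (n:ℝ) ≤ 50 * u := by
    have heq := my_neglog_eq hε0 n
    rw [← ht_def] at heq
    have hlam1 : (1:ℝ) ≤ -Real.log ε₀ := by linarith
    have hp0 : (0:ℝ) < (5/4:ℝ) ^ n := by positivity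
    have hp1 : (5/4:ℝ) ^ n ≤ t := by
      have h := mul_le_mul_of_nonneg_left hlam1 hp0.le
      rw [mul_one] at h
      linarith
    have hp2 : (n:ℝ) * Real.log (5/4) ≤ Real.log t := by
      rw [← Real.log_pow]
      exact (Real.log_le_log_iff hp0 ht0).mpr hp1
    have hlog54 : (1/5:ℝ) ≤ Real.log (5/4) := by
      have h := Real.log_le_sub_one_of_pos (show (0:ℝ) < 4/5 by norm_num)
      rw [show ((4:ℝ)/5) = ((5:ℝ)/4)⁻¹ by norm_num, Real.log_inv] at h
      linarith
    linarith only [mul_le_mul_of_nonneg_left hlog54 (by positivity : (0:ℝ) ≤ (n:ℝ)),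
      hp2, hlogt10u]
  have hn2 : (n:ℝ) ^ 2 * t ≤ 2500 * u ^ 12 := by
    have hn2' : (n:ℝ) ^ 2 ≤ 2500 * u ^ 2 := by
      have hq := mul_nonneg (sub_nonneg.mpr hn50u)
        (by positivity : (0:ℝ) ≤ 50 * u + (n:ℝ))
      linarith only [hq]
    have h10 : (0:ℝ) ≤ u ^ 10 := by positivity
    rw [htu]
    linarith only [mul_le_mul_of_nonneg_right hn2' h10]
  -- sigma bounds
  have hsig_le : sig σ₀ n ≤ σ₀ := my_sig_le hσ₀ n
  have hsig_ge : σ₀ / 2 ≤ sig σ₀ n := my_sig_ge hσ₀ n hn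
  have hsig_pos : 0 < sig σ₀ n := by linarith
  -- the ratio and Ln
  have hrat : eps ε₀ (n+1) / eps ε₀ n = eps ε₀ n ^ ((1:ℝ)/4) := by
    rw [my_eps_succ, show ((1:ℝ)/4) = (5/4 : ℝ) - 1 by norm_num,
      Real.rpow_sub heps0, Real.rpow_one]
  have hLe : Ln σ₀ ε₀ n = t / (4 * sig σ₀ n) := by
    unfold Ln
    rw [hrat, Real.log_rpow heps0]
    rw [abs_mul, abs_of_nonneg (show (0:ℝ) ≤ 1/4 by norm_num), abs_of_neg hlogneg]
    rw [← ht_def]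
    ring
  have hL1 : 1 ≤ Ln σ₀ ε₀ n := by
    rw [hLe, le_div_iff₀ (by positivity)]
    linarith
  have hL0 : 0 ≤ Ln σ₀ ε₀ n := by linarith
  have hlogL0 : 0 ≤ Real.log (Ln σ₀ ε₀ n) := Real.log_nonneg hL1
  have hLle : Ln σ₀ ε₀ n ≤ (1 / (2 * σ₀) + 1) * u ^ 10 := by
    rw [hLe, div_le_iff₀ (by positivity)]
    have h2 : (1 / (2 * σ₀)) * (2 * σ₀) = 1 := by field_simp
    have h1 : (1:ℝ) ≤ (1 / (2 * σ₀) + 1) * (4 * sig σ₀ n) := by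
      linarith only [mul_le_mul_of_nonneg_left
        (show 2 * σ₀ ≤ 4 * sig σ₀ n by linarith)
        (show (0:ℝ) ≤ 1 / (2 * σ₀) by positivity), h2, hsig_pos]
    have h9 := mul_le_mul_of_nonneg_left h1 (show (0:ℝ) ≤ u ^ 10 by positivity)
    rw [htu]
    linarith only [h9]
  have hlogL : Real.log (Ln σ₀ ε₀ n) ≤ E₄ * u := by
    have h2 : Real.log (Ln σ₀ ε₀ n) ≤ Real.log ((1 / (2 * σ₀) + 1) * u ^ 10) :=
      (Real.log_le_log_iff (by linarith) (by positivity)).mpr hLle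
    rw [Real.log_mul (by positivity) (by positivity), Real.log_pow] at h2
    push_cast at h2
    have h3 : Real.log u ≤ u - 1 := Real.log_le_sub_one_of_pos hu0
    have h0' : (0:ℝ) ≤ 1 / (2 * σ₀) := by positivity
    have h4 : 0 ≤ Real.log (1 / (2 * σ₀) + 1) :=
      Real.log_nonneg (by linarith)
    rw [hE₄def]
    linarith only [h2, h3, h4, mul_nonneg h4 (by linarith : (0:ℝ) ≤ u - 1)]
  -- main membership bound
  have hmemb : ∀ A ∈ An m β₀ ε₀ n,
      ((A.card : ℝ) ≤ G₁ * u ^ 6 ∧ ∀ i ∈ A, (i:ℝ) ≤ E₂ * u ^ 12) := by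
    intro A hA
    have hAn : eps ε₀ (n+1) / eps ε₀ n ≤ mProd m A ^ mun β₀ n := hA
    have hmApos : 0 < mProd m A := Finset.prod_pos fun i _ => hm.pos i
    have h8 : (0:ℝ) < 8 * (n:ℝ) ^ 2 := by positivity
    have hlog1 : Real.log (eps ε₀ n ^ ((1:ℝ)/4)) ≤ Real.log (mProd m A ^ mun β₀ n) := by
      refine (Real.log_le_log_iff (by positivity) ?_).mpr ?_
      · exact Real.rpow_pos_of_pos hmApos _
      · rw [← hrat]; exact hAn
    rw [Real.log_rpow heps0, Real.log_rpow hmApos] at hlog1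
    have hmun : mun β₀ n = β₀ / (8 * (n:ℝ) ^ 2) := rfl
    rw [hmun] at hlog1
    obtain ⟨X, hX_def⟩ : ∃ x : ℝ, x = -Real.log (mProd m A) := ⟨_, rfl⟩
    have hlmA : Real.log (mProd m A) = -X := by rw [hX_def]; ring
    rw [hlmA] at hlog1
    have hleps : Real.log (eps ε₀ n) = -t := by rw [ht_def]; ring
    rw [hleps] at hlog1
    have hXR : X * β₀ ≤ 2 * (n:ℝ) ^ 2 * t := by
      have h2 := mul_le_mul_of_nonneg_right hlog1 h8.le
      have e : (β₀ / (8 * (n:ℝ) ^ 2) * (-X)) * (8 * (n:ℝ) ^ 2) = β₀ * (-X) := by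
        field_simp
      rw [e] at h2
      linarith only [h2]
    -- the sum of logs bound
    have hXsum : Real.log (mProd m A) = ∑ i ∈ A, Real.log (m i) :=
      Real.log_prod (s := A) (f := m) fun i _ => (hm.pos i).ne'
    have hterm : ∀ i ∈ A, κ * (i:ℝ) - Real.log M ≤ -Real.log (m i) := by
      intro i _
      have hd := hm.decay i
      have hpos := hm.pos i
      have hlm : Real.log (m i) ≤ Real.log (M * Real.exp (-κ * i)) :=
        (Real.log_le_log_iff hpos (by positivity)).mpr hd
      rw [Real.log_mul (ne_of_gt hM0) (Real.exp_ne_zero _), Real.log_exp] at hlm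
      linarith
    have hsum1 : κ * (∑ i ∈ A, (i:ℝ)) - (A.card : ℝ) * Real.log M ≤ X := by
      have h5 : ∑ i ∈ A, (κ * (i:ℝ) - Real.log M) ≤ ∑ i ∈ A, -Real.log (m i) :=
        Finset.sum_le_sum hterm
      rw [Finset.sum_sub_distrib, ← Finset.mul_sum, Finset.sum_const,
        nsmul_eq_mul, Finset.sum_neg_distrib, ← hXsum] at h5
      rw [hX_def]
      linarith
    have hS1 : κ * (∑ i ∈ A, (i:ℝ)) ≤ 2 * (n:ℝ) ^ 2 * t / β₀ + (A.card : ℝ) * Real.log M := by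
      have hX2 : X ≤ 2 * (n:ℝ) ^ 2 * t / β₀ := by
        rw [le_div_iff₀ hβ0]; exact hXR
      linarith
    -- triangular bound
    have htriR : (A.card : ℝ) ^ 2 - (A.card : ℝ) ≤ 2 * ∑ i ∈ A, (i:ℝ) := by
      have h1 : ((∑ i ∈ Finset.range A.card, i : ℕ) : ℝ) ≤ ((∑ i ∈ A, i : ℕ) : ℝ) :=
        Nat.cast_le.mpr (my_tri A)
      push_cast at h1
      rw [← my_gauss A.card]
      linarith
    obtain ⟨kr, hkr_def⟩ : ∃ x : ℝ, x = (A.card : ℝ) := ⟨_, rfl⟩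
    rw [← hkr_def] at htriR hS1
    have hkr0 : (0:ℝ) ≤ kr := by rw [hkr_def]; exact Nat.cast_nonneg _
    have hRβ : (2 * (n:ℝ) ^ 2 * t / β₀) * β₀ = 2 * (n:ℝ) ^ 2 * t := by field_simp
    have b1 : κ * (kr ^ 2 - kr) ≤ 2 * (2 * (n:ℝ) ^ 2 * t / β₀) + 2 * kr * Real.log M := by
      linarith only [mul_le_mul_of_nonneg_left htriR hκ.le, hS1]
    have b2 : κ * β₀ * (kr ^ 2 - kr) ≤ 10000 * u ^ 12 + 2 * kr * β₀ * Real.log M := by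
      linarith only [mul_le_mul_of_nonneg_right b1 hβ0.le, hRβ, hn2,
        mul_nonneg (mul_nonneg hkr0 hβ0.le) hlogM0]
    have am2 : 2 * κ * kr * β₀ * Real.log M + κ ^ 2 * β₀ * kr
        ≤ κ ^ 2 * kr ^ 2 / 4 * β₀ + (2 * Real.log M + κ) ^ 2 * β₀ := by
      linarith only [mul_nonneg hβ0.le (sq_nonneg (κ * kr / 2 - (2 * Real.log M + κ)))]
    have key : κ ^ 2 * β₀ * kr ^ 2 ≤ 40000 * κ * u ^ 12
        + 8 * (2 * Real.log M + κ) ^ 2 * u ^ 12 * β₀ := by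
      linarith only [mul_le_mul_of_nonneg_left b2 hκ.le, am2,
        mul_nonneg hκ.le (show (0:ℝ) ≤ u ^ 12 by positivity),
        mul_nonneg (mul_nonneg (sq_nonneg (2 * Real.log M + κ)) hβ0.le)
          (sub_nonneg.mpr hu12),
        mul_nonneg (mul_nonneg (sq_nonneg (2 * Real.log M + κ)) hβ0.le)
          (show (0:ℝ) ≤ u ^ 12 by positivity),
        mul_nonneg (sq_nonneg (2 * Real.log M + κ)) hβ0.le]
    have hk2 : kr ^ 2 ≤ E₁ * u ^ 12 := by
      have hpos2 : (0:ℝ) < κ ^ 2 * β₀ := by positivity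
      rw [show E₁ * u ^ 12 = (40000 * κ * u ^ 12
          + 8 * (2 * Real.log M + κ) ^ 2 * u ^ 12 * β₀) / (κ ^ 2 * β₀) by
        rw [hE₁def]; field_simp, le_div_iff₀ hpos2]
      linarith only [key]
    have hkG : kr ≤ G₁ * u ^ 6 := by
      have h3 : E₁ * u ^ 12 = (G₁ * u ^ 6) ^ 2 := by
        rw [mul_pow, hG₁sq]; ring
      calc kr = Real.sqrt (kr ^ 2) := (Real.sqrt_sq hkr0).symm
        _ ≤ Real.sqrt ((G₁ * u ^ 6) ^ 2) := Real.sqrt_le_sqrt (by rw [← h3]; exact hk2)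
        _ = G₁ * u ^ 6 := Real.sqrt_sq (by positivity)
    refine ⟨by rw [← hkr_def]; exact hkG, fun i hi => ?_⟩
    have hiSr : (i:ℝ) ≤ ∑ j ∈ A, (j:ℝ) :=
      Finset.single_le_sum (f := fun j : ℕ => (j:ℝ)) (fun j _ => Nat.cast_nonneg j) hi
    have hcMpos : (0:ℝ) < 2 * Real.log M + κ := by linarith
    have h1 : κ * (∑ j ∈ A, (j:ℝ)) ≤ 2 * (n:ℝ) ^ 2 * t / β₀
        + (G₁ * u ^ 6) * (2 * Real.log M + κ) := by
      have h6 : kr * Real.log M ≤ (G₁ * u ^ 6) * (2 * Real.log M + κ) :=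
        mul_le_mul hkG (by linarith) hlogM0 (by positivity)
      linarith only [hS1, h6]
    have ha : 2 * (n:ℝ) ^ 2 * t / β₀ ≤ (5000 / β₀) * u ^ 12 := by
      rw [div_le_iff₀ hβ0]
      have e : (5000 / β₀) * u ^ 12 * β₀ = 5000 * u ^ 12 := by field_simp
      rw [e]
      linarith only [hn2]
    have hb : G₁ * u ^ 6 * (2 * Real.log M + κ)
        ≤ G₁ * (2 * Real.log M + κ) * u ^ 12 := by
      linarith only [mul_le_mul_of_nonneg_left hu612 (mul_nonneg hG₁0 hcMpos.le)]
    have h3 : (∑ j ∈ A, (j:ℝ)) ≤ E₂ * u ^ 12 := by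
      rw [hE₂def, div_mul_eq_mul_div, le_div_iff₀ hκ]
      linarith only [h1, ha, hb]
    linarith only [hiSr, h3]
  -- the finite superset
  obtain ⟨Kn, hKn_def⟩ : ∃ x : ℕ, x = ⌊G₁ * u ^ 6⌋₊ := ⟨_, rfl⟩
  obtain ⟨Nn, hNn_def⟩ : ∃ x : ℕ, x = ⌊E₂ * u ^ 12⌋₊ := ⟨_, rfl⟩
  have hKb0 : (0:ℝ) ≤ G₁ * u ^ 6 := by positivity
  have hNb0 : (0:ℝ) ≤ E₂ * u ^ 12 := by positivity
  set Pfin : Finset (Finset ℕ) :=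
    (Finset.range (Nn + 1)).powerset.filter (fun B => B.card ≤ Kn) with hPfin_def
  have hsub : An m β₀ ε₀ n ⊆ ↑Pfin := by
    intro A hA
    obtain ⟨hc, he⟩ := hmemb A hA
    rw [Finset.mem_coe, hPfin_def, Finset.mem_filter, Finset.mem_powerset]
    refine ⟨fun i hi => Finset.mem_range.mpr ?_, by rw [hKn_def]; exact Nat.le_floor hc⟩
    have h7 : i ≤ Nn := by rw [hNn_def]; exact Nat.le_floor (he i hi)
    omega
  have hfin : (An m β₀ ε₀ n).Finite := Set.Finite.subset Pfin.finite_toSet hsub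
  refine ⟨hfin, ?_⟩
  have hsubP : hfin.toFinset ⊆ Pfin := by
    intro A hA
    rw [Set.Finite.mem_toFinset] at hA
    exact hsub hA
  -- cardinality of Pfin
  have hPcard : Pfin.card ≤ (Kn + 1) * (Nn + 1) ^ Kn := by
    have h1 : Pfin ⊆ (Finset.range (Kn + 1)).biUnion
        (fun k => Finset.powersetCard k (Finset.range (Nn + 1))) := by
      intro A hA
      rw [hPfin_def, Finset.mem_filter, Finset.mem_powerset] at hA
      exact Finset.mem_biUnion.mpr ⟨A.card, Finset.mem_range.mpr (Nat.lt_succ_of_le hA.2),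
        (Finset.mem_powersetCard).mpr ⟨hA.1, rfl⟩⟩
    calc Pfin.card ≤ _ := Finset.card_le_card h1
      _ ≤ ∑ k ∈ Finset.range (Kn + 1), (Finset.powersetCard k (Finset.range (Nn + 1))).card :=
        Finset.card_biUnion_le
      _ ≤ ∑ k ∈ Finset.range (Kn + 1), (Nn + 1) ^ Kn := by
        refine Finset.sum_le_sum fun k hk => ?_
        rw [Finset.card_powersetCard, Finset.card_range]
        exact le_trans (Nat.choose_le_pow _ _)
          (Nat.pow_le_pow_right (Nat.succ_pos _) (by
            have := Finset.mem_range.mp hk; omega))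
      _ = (Kn + 1) * (Nn + 1) ^ Kn := by
        rw [Finset.sum_const, Finset.card_range, smul_eq_mul]
  -- bounds linking floors to real quantities
  have hKnKb : (Kn : ℝ) ≤ G₁ * u ^ 6 := by rw [hKn_def]; exact Nat.floor_le hKb0
  have hNnNb : (Nn : ℝ) ≤ E₂ * u ^ 12 := by rw [hNn_def]; exact Nat.floor_le hNb0
  have hlogNb : Real.log (E₂ * u ^ 12 + 1) ≤ E₃ * u := by
    have h1 : E₂ * u ^ 12 + 1 ≤ (E₂ + 1) * u ^ 12 := by linarith only [hu12]
    have h2 : Real.log (E₂ * u ^ 12 + 1) ≤ Real.log ((E₂ + 1) * u ^ 12) :=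
      (Real.log_le_log_iff (by positivity) (by positivity)).mpr h1
    rw [Real.log_mul (by positivity) (by positivity), Real.log_pow] at h2
    push_cast at h2
    have h3 : Real.log u ≤ u - 1 := Real.log_le_sub_one_of_pos hu0
    have h4 : 0 ≤ Real.log (E₂ + 1) := Real.log_nonneg (by linarith only [hE₂0])
    rw [hE₃def]
    linarith only [h2, h3, h4, mul_nonneg h4 (by linarith : (0:ℝ) ≤ u - 1)]
  have hlogKb : Real.log (G₁ * u ^ 6 + 1) ≤ G₁ * u ^ 6 := by
    have := Real.log_le_sub_one_of_pos (show (0:ℝ) < G₁ * u ^ 6 + 1 by positivity)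
    linarith only [this]
  -- the final numeric inequality
  have hFinal : Real.log (G₁ * u ^ 6 + 1) + (G₁ * u ^ 6) * Real.log (E₂ * u ^ 12 + 1)
      + (2 * (G₁ * u ^ 6) + 1) * Real.log (Ln σ₀ ε₀ n) ≤ u ^ 8 := by
    have p1 : (G₁ * u ^ 6) * Real.log (E₂ * u ^ 12 + 1) ≤ (G₁ * u ^ 6) * (E₃ * u) :=
      mul_le_mul_of_nonneg_left hlogNb hKb0
    have p2 : (2 * (G₁ * u ^ 6) + 1) * Real.log (Ln σ₀ ε₀ n)
        ≤ (2 * (G₁ * u ^ 6) + 1) * (E₄ * u) :=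
      mul_le_mul_of_nonneg_left hlogL (by linarith only [hKb0])
    have q1 : u ^ 6 ≤ u ^ 7 := pow_le_pow_right₀ hu1 (by norm_num)
    have q2 : u ≤ u ^ 7 := le_self_pow₀ hu1 (by norm_num)
    have hu7 : (0:ℝ) ≤ u ^ 7 := by positivity
    have hDexp : D * u ^ 7 = G₁ * u ^ 7 + G₁ * E₃ * u ^ 7 + 2 * G₁ * E₄ * u ^ 7
        + E₄ * u ^ 7 + u ^ 7 := by rw [hDdef]; ring
    linarith only [hlogKb, p1, p2,
      mul_le_mul_of_nonneg_left q1 hG₁0,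
      mul_le_mul_of_nonneg_left q2 hE₄0,
      mul_le_mul_of_nonneg_right huD hu7, hDexp, hu7]
  -- assembling the chain
  have habs : |Real.log (eps ε₀ n)| = t := by
    rw [abs_of_neg hlogneg, ht_def]
  rw [habs, one_mul, ht45]
  have hcast : (((Kn + 1) * (Nn + 1) ^ Kn : ℕ) : ℝ)
      = ((Kn : ℝ) + 1) * ((Nn : ℝ) + 1) ^ Kn := by push_cast; ring
  have e1 : ((Kn : ℝ) + 1) ≤ Real.exp (Real.log (G₁ * u ^ 6 + 1)) := by
    rw [Real.exp_log (by positivity)]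
    linarith
  have hlogNb0 : 0 ≤ Real.log (E₂ * u ^ 12 + 1) :=
    Real.log_nonneg (by linarith only [hNb0])
  have e2 : ((Nn : ℝ) + 1) ^ Kn ≤ Real.exp ((G₁ * u ^ 6) * Real.log (E₂ * u ^ 12 + 1)) := by
    calc ((Nn : ℝ) + 1) ^ Kn ≤ (E₂ * u ^ 12 + 1) ^ Kn :=
          pow_le_pow_left₀ (by positivity) (by linarith) _
      _ = Real.exp (Real.log (E₂ * u ^ 12 + 1)) ^ Kn := by
          rw [Real.exp_log (by positivity)]
      _ = Real.exp ((Kn : ℝ) * Real.log (E₂ * u ^ 12 + 1)) := (Real.exp_nat_mul _ _).symm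
      _ ≤ _ := Real.exp_le_exp.mpr (mul_le_mul_of_nonneg_right hKnKb hlogNb0)
  have e3 : Ln σ₀ ε₀ n ^ (2 * Kn + 1)
      ≤ Real.exp ((2 * (G₁ * u ^ 6) + 1) * Real.log (Ln σ₀ ε₀ n)) := by
    calc Ln σ₀ ε₀ n ^ (2 * Kn + 1)
        = Real.exp (Real.log (Ln σ₀ ε₀ n)) ^ (2 * Kn + 1) := by
          rw [Real.exp_log (by linarith)]
      _ = Real.exp (((2 * Kn + 1 : ℕ) : ℝ) * Real.log (Ln σ₀ ε₀ n)) :=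
          (Real.exp_nat_mul _ _).symm
      _ ≤ _ := by
          refine Real.exp_le_exp.mpr (mul_le_mul_of_nonneg_right ?_ hlogL0)
          push_cast
          linarith only [hKnKb]
  calc ∑ A ∈ hfin.toFinset, Ln σ₀ ε₀ n ^ (2 * A.card + 1)
      ≤ ∑ A ∈ Pfin, Ln σ₀ ε₀ n ^ (2 * A.card + 1) :=
        Finset.sum_le_sum_of_subset_of_nonneg hsubP fun A _ _ => pow_nonneg hL0 _
    _ ≤ ∑ A ∈ Pfin, Ln σ₀ ε₀ n ^ (2 * Kn + 1) := by
        refine Finset.sum_le_sum fun A hA => ?_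
        refine pow_le_pow_right₀ hL1 ?_
        rw [hPfin_def, Finset.mem_filter] at hA
        omega
    _ = (Pfin.card : ℝ) * Ln σ₀ ε₀ n ^ (2 * Kn + 1) := by
        rw [Finset.sum_const, nsmul_eq_mul]
    _ ≤ (((Kn + 1) * (Nn + 1) ^ Kn : ℕ) : ℝ) * Ln σ₀ ε₀ n ^ (2 * Kn + 1) :=
        mul_le_mul_of_nonneg_right (Nat.cast_le.mpr hPcard) (pow_nonneg hL0 _)
    _ = (((Kn : ℝ) + 1) * ((Nn : ℝ) + 1) ^ Kn) * Ln σ₀ ε₀ n ^ (2 * Kn + 1) := by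
        rw [hcast]
    _ ≤ (Real.exp (Real.log (G₁ * u ^ 6 + 1))
          * Real.exp ((G₁ * u ^ 6) * Real.log (E₂ * u ^ 12 + 1)))
          * Real.exp ((2 * (G₁ * u ^ 6) + 1) * Real.log (Ln σ₀ ε₀ n)) := by
        refine mul_le_mul (mul_le_mul e1 e2 (by positivity) (Real.exp_pos _).le) e3
          (pow_nonneg hL0 _) (by positivity)
    _ = Real.exp (Real.log (G₁ * u ^ 6 + 1) + (G₁ * u ^ 6) * Real.log (E₂ * u ^ 12 + 1)
          + (2 * (G₁ * u ^ 6) + 1) * Real.log (Ln σ₀ ε₀ n)) := by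
        rw [← Real.exp_add, ← Real.exp_add]
    _ ≤ Real.exp (u ^ 8) := Real.exp_le_exp.mpr hFinal
end
end

section
/- Let 0 < ℓ ≤ 2, d ∈ (0,1), and let ξ ∈ ℝ^ℕ be a bounded sequence having covering constant C at dimension d. Fix n ≥ 1 and define q_n = min{ q ∈ ℕ, q ≥ 1 : L_n · q^{−1/d} ≤ ε_n^{1/12} }. Then there exists a finite set 𝓘 ⊆ ℕ with |𝓘| ≤ C·q_n (depending only on ξ, d and q_n, not on A or l below) such that: for every finite set A ⊆ ℕ, every integer vector l = (l_k)_{k∈A} and every integer λ with Σ_{k∈A}|l_k| + |λ| ≤ L_n, one has ∪_{j > max A} { ξ̃ ∈ Λ(ξ) : |Σ_{k∈A} l_k ξ̃_k + λ ξ̃_j| ≤ ε_n^{1/12} } ⊆ ( ∪_{max A < j ≤ q_n} { ξ̃ ∈ Λ(ξ) : |Σ_{k∈A} l_k ξ̃_k + λ ξ̃_j| ≤ ε_n^{1/12} } ) ∪ ( ∪_{i ∈ 𝓘} { ξ̃ ∈ Λ(ξ) : |Σ_{k∈A} l_k ξ̃_k + λ ξ̃_i| ≤ 7·ε_n^{1/12}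 } ). -/
/-!
Common setting: mass sequences, inductive KAM constants ε_n, σ_n, L_n,
the collections 𝔸_n of finite sets, and the Diophantine sets 𝒪_n.
-/

open scoped ENNReal NNReal BigOperators Classical

noncomputable section

open MeasureTheory

/-- Half-width of the `n`-th interval of the Hilbert cube `Λ(ξ)`: `ℓ · n^{-1/d}`
(for `n ≥ 1`; the auxiliary coordinate `n = 0` is given half-width `ℓ`). -/
def cubeWidth (ℓ d : ℝ) (n : ℕ) : ℝ := ℓ * (max (n : ℝ) 1) ^ (-(1 / d))

/-- The `n`-th interval `[ξ_n − ℓ n^{-1/d}, ξ_n + ℓ n^{-1/d}]`. -/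
def cubeBox (ξ : ℕ → ℝ) (ℓ d : ℝ) (n : ℕ) : Set ℝ :=
  Set.Icc (ξ n - cubeWidth ℓ d n) (ξ n + cubeWidth ℓ d n)

/-- The Hilbert cube `Λ(ξ) = ∏_n [ξ_n − ℓ n^{-1/d}, ξ_n + ℓ n^{-1/d}]`. -/
def hilbertCube (ξ : ℕ → ℝ) (ℓ d : ℝ) : Set (ℕ → ℝ) :=
  {x | ∀ k : ℕ, x k ∈ cubeBox ξ ℓ d k}

/-- Normalized Lebesgue measure on the `n`-th interval of `Λ(ξ)`. -/
def factorMeasure (ξ : ℕ → ℝ) (ℓ d : ℝ) (n : ℕ) : Measure ℝ :=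
  (ENNReal.ofReal (2 * cubeWidth ℓ d n))⁻¹ • (volume.restrict (cubeBox ξ ℓ d n))

/-- `μ` is the product probability measure on `Λ(ξ)` (for the product σ-algebra on
`ℕ → ℝ`), characterized by its values on measurable cylinders. -/
def IsCubeMeasure (ξ : ℕ → ℝ) (ℓ d : ℝ) (μ : Measure (ℕ → ℝ)) : Prop :=
  IsProbabilityMeasure μ ∧
  ∀ (F : Finset ℕ) (B : ℕ → Set ℝ), (∀ k, MeasurableSet (B k)) →
    μ ((↑F : Set ℕ).pi B) = ∏ k ∈ F, factorMeasure ξ ℓ d k (B k)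

/-- The resonant strip `ℛ^{(n)}_{A,l}(ξ) = {ξ̃ ∈ Λ(ξ) : |Σ_{j∈A} l_j ξ̃_j| ≤ ε_n^{1/12}}`. -/
def resStrip (ξ : ℕ → ℝ) (ℓ d ε₀ : ℝ) (n : ℕ) (A : Finset ℕ) (l : ℕ → ℤ) :
    Set (ℕ → ℝ) :=
  {x | x ∈ hilbertCube ξ ℓ d ∧
    |∑ j ∈ A, (l j : ℝ) * x j| ≤ eps ε₀ n ^ (1 / 12 : ℝ)}

/-- `ξ` has covering constant `C` at dimension `d`: for every `q ≥ 1` the set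
`{ξ_i : i ∈ ℕ}` can be covered by at most `C·q` closed intervals of length `2 q^{-1/d}`. -/
def HasCoveringConst (ξ : ℕ → ℝ) (d C : ℝ) : Prop :=
  ∀ q : ℕ, 1 ≤ q → ∃ T : Finset ℝ, (T.card : ℝ) ≤ C * q ∧
    ∀ i : ℕ, ∃ c ∈ T, |ξ i - c| ≤ (q : ℝ) ^ (-(1 / d))

/-!
STATEMENT 13 (Lemma 7.5, clustering of resonances): with
`q_n = min{q ≥ 1 : L_n q^{-1/d} ≤ ε_n^{1/12}}`, there is a finite set `𝓘 ⊆ ℕ` with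
`|𝓘| ≤ C q_n` (independent of `A`, `l`, `λ`) such that every point of a far resonance
`|Σ_{k∈A} l_k ξ̃_k + λ ξ̃_j| ≤ ε_n^{1/12}` (`j > max A`) lies either in such a strip
with `j ≤ q_n` or in a widened strip `|Σ_{k∈A} l_k ξ̃_k + λ ξ̃_i| ≤ 7 ε_n^{1/12}`
with `i ∈ 𝓘`.
-/

theorem resonance_clustering
    (ℓ d : ℝ) (hℓ0 : 0 < ℓ) (hℓ2 : ℓ ≤ 2) (hd : d ∈ Set.Ioo (0 : ℝ) 1)
    (ξ : ℕ → ℝ) (hbdd : ∃ B : ℝ, ∀ i, |ξ i| ≤ B)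
    (C : ℝ) (hcov : HasCoveringConst ξ d C)
    (β₀ σ₀ ε₀ : ℝ) (hβ₀ : β₀ ∈ Set.Ioo (0 : ℝ) 1) (hσ₀ : 0 < σ₀)
    (hε₀ : ε₀ ∈ Set.Ioo (0 : ℝ) 1)
    (n : ℕ) (hn : 1 ≤ n)
    (qn : ℕ)
    (hqn : IsLeast {q : ℕ | 1 ≤ q ∧
      Ln σ₀ ε₀ n * (q : ℝ) ^ (-(1 / d)) ≤ eps ε₀ n ^ (1 / 12 : ℝ)} qn) :
    ∃ I : Finset ℕ, (I.card : ℝ) ≤ C * qn ∧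
      ∀ (A : Finset ℕ) (l : ℕ → ℤ) (lam : ℤ),
        (((∑ k ∈ A, (l k).natAbs) + lam.natAbs : ℕ) : ℝ) ≤ Ln σ₀ ε₀ n →
        ∀ x ∈ hilbertCube ξ ℓ d,
        ∀ j : ℕ, (∀ k ∈ A, k < j) →
          |(∑ k ∈ A, (l k : ℝ) * x k) + (lam : ℝ) * x j| ≤ eps ε₀ n ^ (1 / 12 : ℝ) →
          (∃ j' : ℕ, (∀ k ∈ A, k < j') ∧ j' ≤ qn ∧
            |(∑ k ∈ A, (l k : ℝ) * x k) + (lam : ℝ) * x j'| ≤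
              eps ε₀ n ^ (1 / 12 : ℝ)) ∨
          (∃ i ∈ I,
            |(∑ k ∈ A, (l k : ℝ) * x k) + (lam : ℝ) * x i| ≤
              7 * eps ε₀ n ^ (1 / 12 : ℝ)) := by
  classical
  obtain ⟨T, hTcard, hTcov⟩ := hcov qn hqn.1.1
  have hq1 : (1 : ℝ) ≤ (qn : ℝ) := by exact_mod_cast hqn.1.1
  have hq0 : (0 : ℝ) < (qn : ℝ) := lt_of_lt_of_le one_pos hq1
  set w : ℝ := (qn : ℝ) ^ (-(1 / d)) with hwdef
  have hw0 : (0 : ℝ) ≤ w := Real.rpow_nonneg (le_of_lt hq0) _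
  set ε : ℝ := eps ε₀ n ^ (1 / 12 : ℝ) with hεdef
  set L : ℝ := Ln σ₀ ε₀ n with hLdef
  have hLw : L * w ≤ ε := hqn.1.2
  have hexp : -(1 / d) ≤ 0 := by
    have : 0 < 1 / d := div_pos one_pos hd.1
    linarith
  let f : ℝ → ℕ := fun c =>
    if h : ∃ i : ℕ, qn ≤ i ∧ |ξ i - c| ≤ w then h.choose else 0
  refine ⟨T.image f, ?_, ?_⟩
  · calc ((T.image f).card : ℝ) ≤ (T.card : ℝ) := by
          exact_mod_cast Finset.card_image_le
      _ ≤ C * qn := hTcard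
  · intro A l lam hL x hx j hjA hres
    rcases le_or_gt j qn with hj | hj
    · exact Or.inl ⟨j, hjA, hj, hres⟩
    · obtain ⟨c, hcT, hc⟩ := hTcov j
      have hex : ∃ i : ℕ, qn ≤ i ∧ |ξ i - c| ≤ w := ⟨j, hj.le, hc⟩
      have hfc : f c = hex.choose := by simp only [f]; rw [dif_pos hex]
      obtain ⟨hiq, hic⟩ := hex.choose_spec
      set i := hex.choose with hidef
      refine Or.inr ⟨f c, Finset.mem_image_of_mem f hcT, ?_⟩
      rw [hfc]
      -- basic bounds
      have hlam : |(lam : ℝ)| ≤ L := by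
        have h1 : (lam.natAbs : ℝ) ≤ L := by
          refine le_trans ?_ hL
          exact_mod_cast Nat.le_add_left _ _
        rwa [Nat.cast_natAbs, Int.cast_abs] at h1
      have hL0 : 0 ≤ L := le_trans (abs_nonneg _) hlam
      -- rpow monotonicity
      have hjR : (qn : ℝ) ≤ (j : ℝ) := by exact_mod_cast hj.le
      have hiR : (qn : ℝ) ≤ (i : ℝ) := by exact_mod_cast hiq
      have hjw : (j : ℝ) ^ (-(1 / d)) ≤ w :=
        Real.rpow_le_rpow_of_nonpos hq0 hjR hexp
      have hiw : (i : ℝ) ^ (-(1 / d)) ≤ w :=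
        Real.rpow_le_rpow_of_nonpos hq0 hiR hexp
      -- cube width bounds
      have hmaxj : max (j : ℝ) 1 = (j : ℝ) := max_eq_left (le_trans hq1 hjR)
      have hmaxi : max (i : ℝ) 1 = (i : ℝ) := max_eq_left (le_trans hq1 hiR)
      have hxj : |x j - ξ j| ≤ 2 * w := by
        have hm := hx j
        rw [cubeBox, Set.mem_Icc] at hm
        have h1 : |x j - ξ j| ≤ cubeWidth ℓ d j := by
          rw [abs_le]; constructor <;> [linarith [hm.1]; linarith [hm.2]]
        refine le_trans h1 ?_
        rw [cubeWidth, hmaxj]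
        have hjnn : (0 : ℝ) ≤ (j : ℝ) ^ (-(1 / d)) :=
          Real.rpow_nonneg (by positivity) _
        nlinarith
      have hxi : |x i - ξ i| ≤ 2 * w := by
        have hm := hx i
        rw [cubeBox, Set.mem_Icc] at hm
        have h1 : |x i - ξ i| ≤ cubeWidth ℓ d i := by
          rw [abs_le]; constructor <;> [linarith [hm.1]; linarith [hm.2]]
        refine le_trans h1 ?_
        rw [cubeWidth, hmaxi]
        have hinn : (0 : ℝ) ≤ (i : ℝ) ^ (-(1 / d)) :=
          Real.rpow_nonneg (by positivity) _
        nlinarith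
      -- distance between x i and x j
      have hdist : |x i - x j| ≤ 6 * w := by
        have h1 : |x i - x j| ≤ |x i - ξ i| + |ξ i - c| + |c - ξ j| + |ξ j - x j| := by
          have := abs_sub_le (x i) (ξ i) (x j)
          have h2 := abs_sub_le (ξ i) c (x j)
          have h3 := abs_sub_le c (ξ j) (x j)
          linarith
        have h4 : |c - ξ j| = |ξ j - c| := abs_sub_comm _ _
        have h5 : |ξ j - x j| = |x j - ξ j| := abs_sub_comm _ _
        rw [h4, h5] at h1
        linarith
      -- conclude
      have hkey : |(lam : ℝ)| * |x i - x j| ≤ 6 * ε := by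
        calc |(lam : ℝ)| * |x i - x j| ≤ L * (6 * w) :=
              mul_le_mul hlam hdist (abs_nonneg _) hL0
          _ = 6 * (L * w) := by ring
          _ ≤ 6 * ε := by linarith
      have habs : |(lam : ℝ) * x i - (lam : ℝ) * x j| ≤ 6 * ε := by
        rw [← mul_sub, abs_mul]; exact hkey
      calc |(∑ k ∈ A, (l k : ℝ) * x k) + (lam : ℝ) * x i|
          ≤ |(∑ k ∈ A, (l k : ℝ) * x k) + (lam : ℝ) * x j| +
            |(lam : ℝ) * x i - (lam : ℝ) * x j| := by
            have := abs_add_le ((∑ k ∈ A, (l k : ℝ) * x k) + (lam : ℝ) * x j)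
              ((lam : ℝ) * x i - (lam : ℝ) * x j)
            have heq : (∑ k ∈ A, (l k : ℝ) * x k) + (lam : ℝ) * x i =
              ((∑ k ∈ A, (l k : ℝ) * x k) + (lam : ℝ) * x j) +
              ((lam : ℝ) * x i - (lam : ℝ) * x j) := by ring
            rw [heq]; exact this
        _ ≤ ε + 6 * ε := add_le_add hres habs
        _ = 7 * ε := by ring
end
end
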